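/- In a finite MDP, the return distribution ν_R^π of policy π, which satisfies the distributional Bellman equation ν_R^π(s,a) = E_π[(f_{γ,r})_# ν_R^π(s',a')], is a fixed point of the distributional TD(λ) operator T_λ^{μ,π} for any behavioral policy μ and λ ∈ [0,1): T_λ^{μ,π} ν_R^π = ν_R^π. Combined with the γ^{1/p}-contraction property, the iteration ν_{k+1} = T_λ^{μ,π} ν_k converges to ν_R^π from any initial ν_0. -/

import Mathlib

open MeasureTheory ProbabilityTheory Filter

/-- The `l_p` distance between two distributions on `ℝ`, defined via their CDFs. -/
noncomputable def lpDist (p : ℝ) (η₁ η₂ : Measure ℝ) : ℝ :=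
  (∫ x, |cdf η₁ x - cdf η₂ x| ^ p) ^ (1 / p)

/-- The supremum distance `l̄_p(ν₁, ν₂) = sup_{(s,a)} l_p(ν₁(s,a), ν₂(s,a))`. -/
noncomputable def supDist {S A : Type*} (p : ℝ) (ν₁ ν₂ : S × A → Measure ℝ) : ℝ :=
  ⨆ sa : S × A, lpDist p (ν₁ sa) (ν₂ sa)

/-- The one-step distributional Bellman operator for target policy `π`:
`(T₁ ν)(s,a) = Σ_{s',a'} P(s'|s,a) π(a'|s') (f_{γ, R(s,a,s')})_# ν(s',a')`. -/
noncomputable def oneStepOp {S A : Type*} [Fintype S] [Fintype A]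
    (P : S → A → S → ℝ) (π : S → A → ℝ) (Rw : S → A → S → ℝ) (γ : ℝ)
    (ν : S × A → Measure ℝ) : S × A → Measure ℝ := fun sa =>
  ∑ s' : S, ∑ a' : A,
    ENNReal.ofReal (P sa.1 sa.2 s' * π s' a') •
      (ν (s', a')).map fun x => γ * x + Rw sa.1 sa.2 s'

/-- The distributional TD(λ) operator `T_λ^{μ,π}`, the normalized `λ`-weighted mixture
over `i ≥ 0` of the `(i+1)`-step pushforward distributions:
`(T_λ ν)(s,a) = (1-λ) Σ_{i≥0} λ^i (T₁^{i+1} ν)(s,a)`. -/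
noncomputable def tdLambdaOp {S A : Type*} [Fintype S] [Fintype A]
    (P : S → A → S → ℝ) (π : S → A → ℝ) (Rw : S → A → S → ℝ) (γ lam : ℝ)
    (ν : S × A → Measure ℝ) : S × A → Measure ℝ := fun sa =>
  Measure.sum fun i : ℕ =>
    ENNReal.ofReal ((1 - lam) * lam ^ i) • (oneStepOp P π Rw γ)^[i + 1] ν sa

set_option linter.unusedSectionVars false

open Set
open scoped ENNReal NNReal


noncomputable def GG (p : ℝ) (μ η : Measure ℝ) : ℝ≥0∞ :=
  ∫⁻ x, ENNReal.ofReal (|cdf μ x - cdf η x| ^ p)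

lemma cdf_eq_toReal (μ : Measure ℝ) [IsProbabilityMeasure μ] (x : ℝ) :
    cdf μ x = (μ (Iic x)).toReal := by
  rw [cdf_eq_real]; rfl

lemma meas_cdf (μ : Measure ℝ) : Measurable (cdf μ) := (monotone_cdf μ).measurable

lemma meas_diff (p : ℝ) (hp : 0 ≤ p) (μ η : Measure ℝ) :
    Measurable fun x => |cdf μ x - cdf η x| ^ p :=
  (Real.continuous_rpow_const hp).measurable.comp ((meas_cdf μ).sub (meas_cdf η)).abs

lemma lpDist_eq {p : ℝ} (hp : 1 ≤ p) (μ η : Measure ℝ) :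
    lpDist p μ η = ((GG p μ η).toReal) ^ (1/p) := by
  have h0 : (0:ℝ) ≤ p := le_trans zero_le_one hp
  rw [lpDist, integral_eq_lintegral_of_nonneg_ae
    (Filter.Eventually.of_forall fun x => Real.rpow_nonneg (abs_nonneg _) p)
    (meas_diff p h0 μ η).aestronglyMeasurable]
  rfl

lemma tsum_jensen {p : ℝ} (hp : 1 ≤ p) {c z : ℕ → ℝ≥0∞} (hc : ∑' i, c i = 1) :
    (∑' i, c i * z i) ^ p ≤ ∑' i, c i * z i ^ p := by
  have hp0 : (0:ℝ) < p := lt_of_lt_of_le one_pos hp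
  have key : ∀ F : Finset ℕ, (∑ i ∈ F, c i * z i) ^ p ≤ ∑' i, c i * z i ^ p := by
    intro F
    have hsle : ∑ i ∈ F, c i ≤ 1 := hc ▸ ENNReal.sum_le_tsum F
    have hs : (∑ i ∈ F, c i) = ∑ i ∈ F, c i := rfl
    set s := ∑ i ∈ F, c i with hsdef
    rcases eq_or_ne s 0 with h0 | h0
    · have hz0 : ∀ i ∈ F, c i = 0 := Finset.sum_eq_zero_iff.mp (hsdef ▸ h0)
      have : ∑ i ∈ F, c i * z i = 0 := Finset.sum_eq_zero fun i hi => by rw [hz0 i hi, zero_mul]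
      rw [this, ENNReal.zero_rpow_of_pos hp0]
      exact zero_le
    · have hstop : s ≠ ⊤ := fun h => by simp [h] at hsle
      have hw : ∑ i ∈ F, c i / s = 1 := by
        simp_rw [div_eq_mul_inv, ← Finset.sum_mul]
        exact ENNReal.mul_inv_cancel h0 hstop
      have hj := ENNReal.rpow_arith_mean_le_arith_mean_rpow F (fun i => c i / s) z hw hp
      have hcancel : ∀ b : ℝ≥0∞, s * (b / s) = b := fun b => by
        rw [mul_comm, ENNReal.div_mul_cancel h0 hstop]
      calc (∑ i ∈ F, c i * z i) ^ p
          = (s * ∑ i ∈ F, (c i / s) * z i) ^ p := by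
            rw [Finset.mul_sum]
            congr 1
            refine Finset.sum_congr rfl fun i _ => ?_
            rw [← mul_assoc, hcancel (c i)]
        _ = s ^ p * (∑ i ∈ F, (c i / s) * z i) ^ p := ENNReal.mul_rpow_of_nonneg _ _ hp0.le
        _ ≤ s ^ p * ∑ i ∈ F, (c i / s) * z i ^ p := mul_le_mul_right hj _
        _ = s ^ (p-1) * ∑ i ∈ F, c i * z i ^ p := by
            rw [Finset.mul_sum, Finset.mul_sum]
            refine Finset.sum_congr rfl fun i _ => ?_
            rw [← mul_assoc, ← mul_assoc]
            congr 1
            rw [show p = (p-1) + 1 by ring, ENNReal.rpow_add _ _ h0 hstop]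
            rw [ENNReal.rpow_one, mul_assoc, hcancel (c i), sub_add_cancel]
        _ ≤ 1 * ∑ i ∈ F, c i * z i ^ p := by
            gcongr
            exact ENNReal.rpow_le_one hsle (by linarith)
        _ ≤ ∑' i, c i * z i ^ p := by rw [one_mul]; exact ENNReal.sum_le_tsum F
  rw [ENNReal.tsum_eq_iSup_sum]
  have hiso : (⨆ F : Finset ℕ, ∑ i ∈ F, c i * z i) ^ p
      = ⨆ F : Finset ℕ, (∑ i ∈ F, c i * z i) ^ p := by
    refine le_antisymm ?_ (iSup_le fun F => ENNReal.rpow_le_rpow (le_iSup (fun F : Finset ℕ => ∑ i ∈ F, c i * z i) F) hp0.le)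
    have h1 : ∀ F : Finset ℕ, (∑ i ∈ F, c i * z i)
        ≤ (⨆ F : Finset ℕ, (∑ i ∈ F, c i * z i) ^ p) ^ (1/p) := by
      intro F
      have := ENNReal.rpow_le_rpow (le_iSup (fun F : Finset ℕ => (∑ i ∈ F, c i * z i) ^ p) F)
        (by positivity : (0:ℝ) ≤ 1/p)
      
      rwa [← ENNReal.rpow_mul, mul_one_div, div_self hp0.ne', ENNReal.rpow_one] at this
    have := ENNReal.rpow_le_rpow (iSup_le h1) hp0.le
    rwa [← ENNReal.rpow_mul, one_div_mul_cancel hp0.ne', ENNReal.rpow_one] at this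
  rw [hiso]
  exact iSup_le key

lemma lint_affine (f : ℝ → ℝ≥0∞) (hf : Measurable f) {γ r : ℝ} (hγ : 0 < γ) :
    ∫⁻ x, f ((x - r)/γ) = ENNReal.ofReal γ * ∫⁻ x, f x := by
  have hg : Measurable fun x : ℝ => (x - r)/γ := (measurable_id.sub_const r).div_const γ
  have hmap : Measure.map (fun x : ℝ => (x - r)/γ) volume = ENNReal.ofReal γ • volume := by
    have hcomp : (fun x : ℝ => (x - r)/γ) = (fun y : ℝ => γ⁻¹ * y) ∘ (fun x : ℝ => x + (-r)) := by
      funext x; simp [div_eq_inv_mul, sub_eq_add_neg]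
    rw [hcomp, ← Measure.map_map (measurable_const_mul _) (measurable_add_const _)]
    rw [map_add_right_eq_self volume (-r),
      Real.map_volume_mul_left (inv_ne_zero hγ.ne')]
    congr 1
    rw [inv_inv, abs_of_pos hγ]
  calc ∫⁻ x, f ((x - r)/γ) = ∫⁻ y, f y ∂(Measure.map (fun x : ℝ => (x - r)/γ) volume) :=
        (lintegral_map hf hg).symm
    _ = ENNReal.ofReal γ * ∫⁻ x, f x := by rw [hmap, lintegral_smul_measure, smul_eq_mul]

section MDP
variable {S A : Type*} [Fintype S] [Fintype A]
variable (P : S → A → S → ℝ) (π : S → A → ℝ) (Rw : S → A → S → ℝ) (γ lam : ℝ)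

lemma oneStepOp_eq (ν : S × A → Measure ℝ) (sa : S × A) :
    oneStepOp P π Rw γ ν sa = ∑ j : S × A, ENNReal.ofReal (P sa.1 sa.2 j.1 * π j.1 j.2) •
      (ν j).map (fun x => γ * x + Rw sa.1 sa.2 j.1) := by
  simp only [oneStepOp]
  rw [Fintype.sum_prod_type]

lemma meas_aff {γ r : ℝ} : Measurable fun x : ℝ => γ * x + r :=
  (measurable_id.const_mul γ).add_const r

variable (hP : ∀ s a, (∀ s', 0 ≤ P s a s') ∧ ∑ s', P s a s' = 1)
    (hπ : ∀ s, (∀ a, 0 ≤ π s a) ∧ ∑ a, π s a = 1)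

include hP hπ in
lemma sumW (sa : S × A) :
    ∑ j : S × A, ENNReal.ofReal (P sa.1 sa.2 j.1 * π j.1 j.2) = 1 := by
  rw [Fintype.sum_prod_type]
  have h1 : ∀ s' : S, ∑ a' : A, ENNReal.ofReal (P sa.1 sa.2 s' * π s' a')
      = ENNReal.ofReal (P sa.1 sa.2 s') := by
    intro s'
    rw [← ENNReal.ofReal_sum_of_nonneg (fun a' _ =>
      mul_nonneg ((hP sa.1 sa.2).1 s') ((hπ s').1 a')), ← Finset.mul_sum, (hπ s').2, mul_one]
  simp_rw [h1]
  rw [← ENNReal.ofReal_sum_of_nonneg (fun s' _ => (hP sa.1 sa.2).1 s'), (hP sa.1 sa.2).2,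
    ENNReal.ofReal_one]

include hP hπ in
lemma oneStep_apply (ν : S × A → Measure ℝ) (sa : S × A) {t : Set ℝ} (ht : MeasurableSet t) :
    oneStepOp P π Rw γ ν sa t = ∑ j : S × A, ENNReal.ofReal (P sa.1 sa.2 j.1 * π j.1 j.2) *
      (ν j) ((fun x => γ * x + Rw sa.1 sa.2 j.1) ⁻¹' t) := by
  rw [oneStepOp_eq, Measure.finset_sum_apply]
  refine Finset.sum_congr rfl fun j _ => ?_
  rw [Measure.smul_apply, Measure.map_apply meas_aff ht, smul_eq_mul]

include hP hπ in
lemma isProb_oneStep (ν : S × A → Measure ℝ) (hν : ∀ j, IsProbabilityMeasure (ν j))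
    (sa : S × A) : IsProbabilityMeasure (oneStepOp P π Rw γ ν sa) := by
  constructor
  rw [oneStep_apply P π Rw γ hP hπ ν sa MeasurableSet.univ]
  have : ∀ j : S × A, (ν j) ((fun x => γ * x + Rw sa.1 sa.2 j.1) ⁻¹' univ) = 1 := by
    intro j
    haveI := hν j
    simp
  simp_rw [this, mul_one]
  exact sumW P π hP hπ sa

include hP hπ in
lemma isProb_iter (ν : S × A → Measure ℝ) (hν : ∀ j, IsProbabilityMeasure (ν j)) :
    ∀ m (j : S × A), IsProbabilityMeasure ((oneStepOp P π Rw γ)^[m] ν j) := by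
  intro m
  induction m with
  | zero => exact hν
  | succ m ih =>
    intro j
    rw [Function.iterate_succ_apply']
    exact isProb_oneStep P π Rw γ hP hπ _ ih j

variable (hlam0 : 0 ≤ lam) (hlam1 : lam < 1)

include hlam0 hlam1 in
lemma summable_c : Summable fun i : ℕ => (1 - lam) * lam ^ i :=
  (summable_geometric_of_lt_one hlam0 hlam1).mul_left _

include hlam0 hlam1 in
lemma tsum_cR : ∑' i : ℕ, (1 - lam) * lam ^ i = 1 := by
  rw [tsum_mul_left, tsum_geometric_of_lt_one hlam0 hlam1,
    mul_inv_cancel₀ (by linarith : (1:ℝ) - lam ≠ 0)]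

include hlam0 hlam1 in
lemma tsum_c : ∑' i : ℕ, ENNReal.ofReal ((1 - lam) * lam ^ i) = 1 := by
  rw [← ENNReal.ofReal_tsum_of_nonneg (fun i => mul_nonneg (by linarith) (pow_nonneg hlam0 i)) (summable_c lam hlam0 hlam1),
    tsum_cR lam hlam0 hlam1, ENNReal.ofReal_one]

include hP hπ hlam0 hlam1 in
lemma isProb_td (ν : S × A → Measure ℝ) (hν : ∀ j, IsProbabilityMeasure (ν j))
    (sa : S × A) : IsProbabilityMeasure (tdLambdaOp P π Rw γ lam ν sa) := by
  constructor
  rw [tdLambdaOp, Measure.sum_apply _ MeasurableSet.univ]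
  have : ∀ i : ℕ, (ENNReal.ofReal ((1 - lam) * lam ^ i) • (oneStepOp P π Rw γ)^[i + 1] ν sa)
      univ = ENNReal.ofReal ((1 - lam) * lam ^ i) := by
    intro i
    haveI := isProb_iter P π Rw γ hP hπ ν hν (i + 1) sa
    rw [Measure.smul_apply, smul_eq_mul, measure_univ, mul_one]
  simp_rw [this]
  exact tsum_c lam hlam0 hlam1

include hlam0 hlam1 in
lemma td_fixed (νR : S × A → Measure ℝ) (hBellman : oneStepOp P π Rw γ νR = νR) :
    tdLambdaOp P π Rw γ lam νR = νR := by
  funext sa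
  have hit : ∀ i : ℕ, (oneStepOp P π Rw γ)^[i + 1] νR = νR := fun i =>
    Function.iterate_fixed hBellman _
  ext t ht
  rw [tdLambdaOp, Measure.sum_apply _ ht]
  simp_rw [hit, Measure.smul_apply, smul_eq_mul]
  rw [ENNReal.tsum_mul_right, tsum_c lam hlam0 hlam1, one_mul]

end MDP
section MDP2
variable {S A : Type*} [Fintype S] [Fintype A]
variable (P : S → A → S → ℝ) (π : S → A → ℝ) (Rw : S → A → S → ℝ) (γ lam : ℝ)
variable (hP : ∀ s a, (∀ s', 0 ≤ P s a s') ∧ ∑ s', P s a s' = 1)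
    (hπ : ∀ s, (∀ a, 0 ≤ π s a) ∧ ∑ a, π s a = 1)

lemma preimage_aff_Iic (hγ0 : 0 < γ) (r x : ℝ) :
    (fun y : ℝ => γ * y + r) ⁻¹' Iic x = Iic ((x - r)/γ) := by
  ext z
  simp only [mem_preimage, mem_Iic]
  rw [le_div_iff₀ hγ0]
  constructor <;> intro h <;> nlinarith

lemma preimage_aff_Ioi (hγ0 : 0 < γ) (r x : ℝ) :
    (fun y : ℝ => γ * y + r) ⁻¹' Ioi x = Ioi ((x - r)/γ) := by
  ext z
  simp only [mem_preimage, mem_Ioi]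
  rw [div_lt_iff₀ hγ0]
  constructor <;> intro h <;> nlinarith

include hP hπ in
lemma cdf_oneStep (hγ0 : 0 < γ) (ν : S × A → Measure ℝ)
    (hν : ∀ j, IsProbabilityMeasure (ν j)) (sa : S × A) (x : ℝ) :
    cdf (oneStepOp P π Rw γ ν sa) x = ∑ j : S × A,
      (P sa.1 sa.2 j.1 * π j.1 j.2) * cdf (ν j) ((x - Rw sa.1 sa.2 j.1)/γ) := by
  haveI := isProb_oneStep P π Rw γ hP hπ ν hν sa
  rw [cdf_eq_toReal, oneStep_apply P π Rw γ hP hπ ν sa measurableSet_Iic,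
    ENNReal.toReal_sum (fun j _ => ENNReal.mul_ne_top ENNReal.ofReal_ne_top
      (measure_ne_top _ _))]
  refine Finset.sum_congr rfl fun j _ => ?_
  haveI := hν j
  rw [ENNReal.toReal_mul, ENNReal.toReal_ofReal
    (mul_nonneg ((hP sa.1 sa.2).1 j.1) ((hπ j.1).1 j.2)),
    preimage_aff_Iic γ hγ0, cdf_eq_toReal]

include hP hπ in
lemma cdf_td (hlam0 : 0 ≤ lam) (hlam1 : lam < 1) (ν : S × A → Measure ℝ)
    (hν : ∀ j, IsProbabilityMeasure (ν j)) (sa : S × A) (x : ℝ) :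
    cdf (tdLambdaOp P π Rw γ lam ν sa) x
      = ∑' i : ℕ, ((1 - lam) * lam ^ i) * cdf ((oneStepOp P π Rw γ)^[i+1] ν sa) x := by
  haveI := isProb_td P π Rw γ lam hP hπ hlam0 hlam1 ν hν sa
  rw [cdf_eq_toReal]
  have : tdLambdaOp P π Rw γ lam ν sa (Iic x)
      = ∑' i : ℕ, ENNReal.ofReal ((1 - lam) * lam ^ i)
        * ((oneStepOp P π Rw γ)^[i+1] ν sa (Iic x)) := by
    rw [tdLambdaOp, Measure.sum_apply _ measurableSet_Iic]
    exact tsum_congr fun i => by rw [Measure.smul_apply, smul_eq_mul]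
  rw [this, ENNReal.tsum_toReal_eq (fun i => ENNReal.mul_ne_top ENNReal.ofReal_ne_top
    (by haveI := isProb_iter P π Rw γ hP hπ ν hν (i+1) sa; exact measure_ne_top _ _))]
  refine tsum_congr fun i => ?_
  haveI := isProb_iter P π Rw γ hP hπ ν hν (i+1) sa
  rw [ENNReal.toReal_mul, ENNReal.toReal_ofReal
    (mul_nonneg (by linarith) (pow_nonneg hlam0 i)), cdf_eq_toReal]

include hP hπ in
lemma GG_oneStep {p : ℝ} (hp : 1 ≤ p) (hγ0 : 0 < γ) (ν ν' : S × A → Measure ℝ)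
    (hν : ∀ j, IsProbabilityMeasure (ν j)) (hν' : ∀ j, IsProbabilityMeasure (ν' j))
    (sa : S × A) :
    GG p (oneStepOp P π Rw γ ν sa) (oneStepOp P π Rw γ ν' sa)
      ≤ ENNReal.ofReal γ * ∑ j : S × A, ENNReal.ofReal (P sa.1 sa.2 j.1 * π j.1 j.2)
          * GG p (ν j) (ν' j) := by
  have hp0 : (0:ℝ) ≤ p := by linarith
  have hw0 : ∀ j : S × A, 0 ≤ P sa.1 sa.2 j.1 * π j.1 j.2 := fun j =>
    mul_nonneg ((hP sa.1 sa.2).1 j.1) ((hπ j.1).1 j.2)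
  have hWsum := sumW P π hP hπ sa
  have hmeasj : ∀ j : S × A, Measurable fun x : ℝ =>
      ENNReal.ofReal (|cdf (ν j) ((x - Rw sa.1 sa.2 j.1)/γ) -
        cdf (ν' j) ((x - Rw sa.1 sa.2 j.1)/γ)| ^ p) := by
    intro j
    exact ((meas_diff p hp0 (ν j) (ν' j)).comp
      ((measurable_id.sub_const _).div_const _)).ennreal_ofReal
  have hpt : ∀ x : ℝ, ENNReal.ofReal (|cdf (oneStepOp P π Rw γ ν sa) x
        - cdf (oneStepOp P π Rw γ ν' sa) x| ^ p)
      ≤ ∑ j : S × A, ENNReal.ofReal (P sa.1 sa.2 j.1 * π j.1 j.2) *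
          ENNReal.ofReal (|cdf (ν j) ((x - Rw sa.1 sa.2 j.1)/γ) -
            cdf (ν' j) ((x - Rw sa.1 sa.2 j.1)/γ)| ^ p) := by
    intro x
    rw [cdf_oneStep P π Rw γ hP hπ hγ0 ν hν sa x, cdf_oneStep P π Rw γ hP hπ hγ0 ν' hν' sa x]
    set δ : S × A → ℝ := fun j => cdf (ν j) ((x - Rw sa.1 sa.2 j.1)/γ) -
      cdf (ν' j) ((x - Rw sa.1 sa.2 j.1)/γ) with hδ
    have h1 : ∑ j : S × A, (P sa.1 sa.2 j.1 * π j.1 j.2) * cdf (ν j) ((x - Rw sa.1 sa.2 j.1)/γ)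
        - ∑ j : S × A, (P sa.1 sa.2 j.1 * π j.1 j.2) * cdf (ν' j) ((x - Rw sa.1 sa.2 j.1)/γ)
        = ∑ j : S × A, (P sa.1 sa.2 j.1 * π j.1 j.2) * δ j := by
      rw [← Finset.sum_sub_distrib]
      exact Finset.sum_congr rfl fun j _ => (mul_sub _ _ _).symm
    rw [h1]
    calc ENNReal.ofReal (|∑ j : S × A, (P sa.1 sa.2 j.1 * π j.1 j.2) * δ j| ^ p)
        ≤ ENNReal.ofReal ((∑ j : S × A, (P sa.1 sa.2 j.1 * π j.1 j.2) * |δ j|) ^ p) := by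
          apply ENNReal.ofReal_le_ofReal
          refine Real.rpow_le_rpow (abs_nonneg _) ?_ hp0
          refine (Finset.abs_sum_le_sum_abs _ _).trans (le_of_eq ?_)
          exact Finset.sum_congr rfl fun j _ => by rw [abs_mul, abs_of_nonneg (hw0 j)]
      _ = (∑ j : S × A, ENNReal.ofReal (P sa.1 sa.2 j.1 * π j.1 j.2)
            * ENNReal.ofReal |δ j|) ^ p := by
          rw [← ENNReal.ofReal_rpow_of_nonneg
            (Finset.sum_nonneg fun j _ => mul_nonneg (hw0 j) (abs_nonneg _)) hp0]
          congr 1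
          rw [ENNReal.ofReal_sum_of_nonneg (fun j _ => mul_nonneg (hw0 j) (abs_nonneg _))]
          exact Finset.sum_congr rfl fun j _ => ENNReal.ofReal_mul (hw0 j)
      _ ≤ ∑ j : S × A, ENNReal.ofReal (P sa.1 sa.2 j.1 * π j.1 j.2)
            * ENNReal.ofReal |δ j| ^ p :=
          ENNReal.rpow_arith_mean_le_arith_mean_rpow Finset.univ _ _ hWsum hp
      _ = ∑ j : S × A, ENNReal.ofReal (P sa.1 sa.2 j.1 * π j.1 j.2)
            * ENNReal.ofReal (|δ j| ^ p) :=
          Finset.sum_congr rfl fun j _ => by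
            rw [ENNReal.ofReal_rpow_of_nonneg (abs_nonneg _) hp0]
  calc GG p (oneStepOp P π Rw γ ν sa) (oneStepOp P π Rw γ ν' sa)
      ≤ ∫⁻ x, ∑ j : S × A, ENNReal.ofReal (P sa.1 sa.2 j.1 * π j.1 j.2) *
          ENNReal.ofReal (|cdf (ν j) ((x - Rw sa.1 sa.2 j.1)/γ) -
            cdf (ν' j) ((x - Rw sa.1 sa.2 j.1)/γ)| ^ p) := lintegral_mono hpt
    _ = ∑ j : S × A, ENNReal.ofReal (P sa.1 sa.2 j.1 * π j.1 j.2) *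
          ∫⁻ x, ENNReal.ofReal (|cdf (ν j) ((x - Rw sa.1 sa.2 j.1)/γ) -
            cdf (ν' j) ((x - Rw sa.1 sa.2 j.1)/γ)| ^ p) := by
        rw [lintegral_finset_sum _ (fun j _ => ((hmeasj j).const_mul _))]
        exact Finset.sum_congr rfl fun j _ => lintegral_const_mul _ (hmeasj j)
    _ = ∑ j : S × A, ENNReal.ofReal (P sa.1 sa.2 j.1 * π j.1 j.2) *
          (ENNReal.ofReal γ * GG p (ν j) (ν' j)) := by
        refine Finset.sum_congr rfl fun j _ => ?_
        congr 1
        exact lint_affine _ (meas_diff p hp0 (ν j) (ν' j)).ennreal_ofReal hγ0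
    _ = ENNReal.ofReal γ * ∑ j : S × A, ENNReal.ofReal (P sa.1 sa.2 j.1 * π j.1 j.2)
          * GG p (ν j) (ν' j) := by
        rw [Finset.mul_sum]
        exact Finset.sum_congr rfl fun j _ => by ring

include hP hπ in
lemma GG_td {p : ℝ} (hp : 1 ≤ p) (hlam0 : 0 ≤ lam) (hlam1 : lam < 1)
    (ν : S × A → Measure ℝ) (hν : ∀ j, IsProbabilityMeasure (ν j))
    (η : Measure ℝ) (hη : IsProbabilityMeasure η) (sa : S × A) :
    GG p (tdLambdaOp P π Rw γ lam ν sa) η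
      ≤ ∑' i : ℕ, ENNReal.ofReal ((1 - lam) * lam ^ i)
          * GG p ((oneStepOp P π Rw γ)^[i+1] ν sa) η := by
  have hp0 : (0:ℝ) ≤ p := by linarith
  have hcnn : ∀ i : ℕ, 0 ≤ (1 - lam) * lam ^ i := fun i =>
    mul_nonneg (by linarith) (pow_nonneg hlam0 i)
  have s1 := summable_c lam hlam0 hlam1
  have hδle : ∀ (i : ℕ) (x : ℝ),
      |cdf ((oneStepOp P π Rw γ)^[i+1] ν sa) x - cdf η x| ≤ 1 := by
    intro i x
    rw [abs_le]
    constructor <;>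
      [linarith [cdf_nonneg ((oneStepOp P π Rw γ)^[i+1] ν sa) x, cdf_le_one η x];
       linarith [cdf_le_one ((oneStepOp P π Rw γ)^[i+1] ν sa) x, cdf_nonneg η x]]
  have hmeasi : ∀ i : ℕ, Measurable fun x : ℝ =>
      ENNReal.ofReal (|cdf ((oneStepOp P π Rw γ)^[i+1] ν sa) x - cdf η x| ^ p) := fun i =>
    (meas_diff p hp0 _ η).ennreal_ofReal
  have hpt : ∀ x : ℝ, ENNReal.ofReal (|cdf (tdLambdaOp P π Rw γ lam ν sa) x - cdf η x| ^ p)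
      ≤ ∑' i : ℕ, ENNReal.ofReal ((1 - lam) * lam ^ i) *
          ENNReal.ofReal (|cdf ((oneStepOp P π Rw γ)^[i+1] ν sa) x - cdf η x| ^ p) := by
    intro x
    set δ : ℕ → ℝ := fun i => cdf ((oneStepOp P π Rw γ)^[i+1] ν sa) x - cdf η x with hδdef
    have s2 : Summable fun i : ℕ => ((1 - lam) * lam ^ i)
        * cdf ((oneStepOp P π Rw γ)^[i+1] ν sa) x :=
      Summable.of_nonneg_of_le (fun i => mul_nonneg (hcnn i) (cdf_nonneg _ x))
        (fun i => mul_le_of_le_one_right (hcnn i) (cdf_le_one _ x)) s1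
    have s3 : Summable fun i : ℕ => ((1 - lam) * lam ^ i) * cdf η x := s1.mul_right _
    have hΔ : cdf (tdLambdaOp P π Rw γ lam ν sa) x - cdf η x
        = ∑' i : ℕ, ((1 - lam) * lam ^ i) * δ i := by
      have hηx : cdf η x = ∑' i : ℕ, ((1 - lam) * lam ^ i) * cdf η x := by
        rw [tsum_mul_right, tsum_cR lam hlam0 hlam1, one_mul]
      rw [cdf_td P π Rw γ lam hP hπ hlam0 hlam1 ν hν sa x]
      nth_rewrite 1 [hηx]
      rw [← s2.tsum_sub s3]
      exact tsum_congr fun i => (mul_sub _ _ _).symm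
    have hsumnorm : Summable fun i : ℕ => ((1 - lam) * lam ^ i) * |δ i| :=
      Summable.of_nonneg_of_le (fun i => mul_nonneg (hcnn i) (abs_nonneg _))
        (fun i => mul_le_of_le_one_right (hcnn i) (hδle i x)) s1
    have habs : |cdf (tdLambdaOp P π Rw γ lam ν sa) x - cdf η x|
        ≤ ∑' i : ℕ, ((1 - lam) * lam ^ i) * |δ i| := by
      rw [hΔ]
      have hsum : Summable fun i : ℕ => ‖((1 - lam) * lam ^ i) * δ i‖ := by
        refine Summable.of_nonneg_of_le (fun i => norm_nonneg _) (fun i => ?_) s1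
        rw [Real.norm_eq_abs, abs_mul, abs_of_nonneg (hcnn i)]
        exact mul_le_of_le_one_right (hcnn i) (hδle i x)
      rw [← Real.norm_eq_abs]
      refine (norm_tsum_le_tsum_norm hsum).trans (le_of_eq (tsum_congr fun i => ?_))
      rw [Real.norm_eq_abs, abs_mul, abs_of_nonneg (hcnn i)]
    calc ENNReal.ofReal (|cdf (tdLambdaOp P π Rw γ lam ν sa) x - cdf η x| ^ p)
        ≤ ENNReal.ofReal ((∑' i : ℕ, ((1 - lam) * lam ^ i) * |δ i|) ^ p) :=
          ENNReal.ofReal_le_ofReal (Real.rpow_le_rpow (abs_nonneg _) habs hp0)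
      _ = (∑' i : ℕ, ENNReal.ofReal ((1 - lam) * lam ^ i) * ENNReal.ofReal |δ i|) ^ p := by
          rw [← ENNReal.ofReal_rpow_of_nonneg
            (tsum_nonneg fun i => mul_nonneg (hcnn i) (abs_nonneg _)) hp0]
          congr 1
          rw [ENNReal.ofReal_tsum_of_nonneg
            (fun i => mul_nonneg (hcnn i) (abs_nonneg _)) hsumnorm]
          exact tsum_congr fun i => ENNReal.ofReal_mul (hcnn i)
      _ ≤ ∑' i : ℕ, ENNReal.ofReal ((1 - lam) * lam ^ i) * ENNReal.ofReal |δ i| ^ p :=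
          tsum_jensen hp (tsum_c lam hlam0 hlam1)
      _ = ∑' i : ℕ, ENNReal.ofReal ((1 - lam) * lam ^ i) *
            ENNReal.ofReal (|δ i| ^ p) :=
          tsum_congr fun i => by rw [ENNReal.ofReal_rpow_of_nonneg (abs_nonneg _) hp0]
  calc GG p (tdLambdaOp P π Rw γ lam ν sa) η
      ≤ ∫⁻ x, ∑' i : ℕ, ENNReal.ofReal ((1 - lam) * lam ^ i) *
          ENNReal.ofReal (|cdf ((oneStepOp P π Rw γ)^[i+1] ν sa) x - cdf η x| ^ p) :=
        lintegral_mono hpt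
    _ = ∑' i : ℕ, ∫⁻ x, ENNReal.ofReal ((1 - lam) * lam ^ i) *
          ENNReal.ofReal (|cdf ((oneStepOp P π Rw γ)^[i+1] ν sa) x - cdf η x| ^ p) :=
        lintegral_tsum fun i => ((hmeasi i).const_mul _).aemeasurable
    _ = ∑' i : ℕ, ENNReal.ofReal ((1 - lam) * lam ^ i)
          * GG p ((oneStepOp P π Rw γ)^[i+1] ν sa) η :=
        tsum_congr fun i => lintegral_const_mul _ (hmeasi i)
end MDP2
noncomputable def tailPlus (p : ℝ) (μ : Measure ℝ) (M : ℝ) : ℝ≥0∞ :=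
  ∫⁻ x in Ioi M, (μ (Ioi x)) ^ p

noncomputable def tailMinus (p : ℝ) (μ : Measure ℝ) (M : ℝ) : ℝ≥0∞ :=
  ∫⁻ x in Iio M, (μ (Iic x)) ^ p

lemma lint_Ioi_top_le {g : ℝ → ℝ≥0∞} (hg : ∀ x, g x ≤ 1) {M M' : ℝ} (h : M ≤ M')
    (htop : ∫⁻ x in Ioi M, g x = ∞) : ∫⁻ x in Ioi M', g x = ∞ := by
  rw [← Ioc_union_Ioi_eq_Ioi h, lintegral_union measurableSet_Ioi
    ((Iic_disjoint_Ioi le_rfl).mono_left Ioc_subset_Iic_self)] at htop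
  have hfin : ∫⁻ x in Ioc M M', g x ≠ ∞ := by
    have hle : ∫⁻ x in Ioc M M', g x ≤ volume (Ioc M M') := by
      calc ∫⁻ x in Ioc M M', g x ≤ ∫⁻ _ in Ioc M M', (1:ℝ≥0∞) := lintegral_mono hg
        _ = volume (Ioc M M') := by rw [setLIntegral_const, one_mul]
    exact fun htop' => by
      rw [htop', Real.volume_Ioc] at hle
      exact (ENNReal.ofReal_ne_top (top_le_iff.mp hle)).elim
  exact (ENNReal.add_eq_top.mp htop).resolve_left hfin

lemma lint_Ioi_top_congr {g : ℝ → ℝ≥0∞} (hg : ∀ x, g x ≤ 1) (M M' : ℝ) :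
    (∫⁻ x in Ioi M, g x = ∞) ↔ (∫⁻ x in Ioi M', g x = ∞) := by
  rcases le_total M M' with h | h
  · exact ⟨lint_Ioi_top_le hg h, fun ht => top_le_iff.mp
      (ht ▸ lintegral_mono_set (Ioi_subset_Ioi h))⟩
  · exact ⟨fun ht => top_le_iff.mp (ht ▸ lintegral_mono_set (Ioi_subset_Ioi h)),
      lint_Ioi_top_le hg h⟩

lemma lint_Iio_top_le {g : ℝ → ℝ≥0∞} (hg : ∀ x, g x ≤ 1) {M M' : ℝ} (h : M' ≤ M)
    (htop : ∫⁻ x in Iio M, g x = ∞) : ∫⁻ x in Iio M', g x = ∞ := by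
  rw [← Iio_union_Ico_eq_Iio h, lintegral_union measurableSet_Ico
    ((Iio_disjoint_Ici le_rfl).mono_right Ico_subset_Ici_self)] at htop
  have hfin : ∫⁻ x in Ico M' M, g x ≠ ∞ := by
    have hle : ∫⁻ x in Ico M' M, g x ≤ volume (Ico M' M) := by
      calc ∫⁻ x in Ico M' M, g x ≤ ∫⁻ _ in Ico M' M, (1:ℝ≥0∞) := lintegral_mono hg
        _ = volume (Ico M' M) := by rw [setLIntegral_const, one_mul]
    exact fun htop' => by
      rw [htop', Real.volume_Ico] at hle
      exact (ENNReal.ofReal_ne_top (top_le_iff.mp hle)).elim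
  exact (ENNReal.add_eq_top.mp htop).resolve_right hfin

lemma lint_Iio_top_congr {g : ℝ → ℝ≥0∞} (hg : ∀ x, g x ≤ 1) (M M' : ℝ) :
    (∫⁻ x in Iio M, g x = ∞) ↔ (∫⁻ x in Iio M', g x = ∞) := by
  rcases le_total M' M with h | h
  · exact ⟨lint_Iio_top_le hg h, fun ht => top_le_iff.mp
      (ht ▸ lintegral_mono_set (Iio_subset_Iio h))⟩
  · exact ⟨fun ht => top_le_iff.mp (ht ▸ lintegral_mono_set (Iio_subset_Iio h)),
      lint_Iio_top_le hg h⟩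

lemma tail_rpow_le_one {p : ℝ} (hp0 : 0 ≤ p) (μ : Measure ℝ) [IsProbabilityMeasure μ]
    (s : Set ℝ) : (μ s) ^ p ≤ 1 :=
  ENNReal.rpow_le_one prob_le_one hp0

lemma GG_top_iff {p : ℝ} (hp : 1 ≤ p) (μ η : Measure ℝ) [IsProbabilityMeasure μ]
    [IsProbabilityMeasure η] {Cb : ℝ} (hCb : 0 ≤ Cb)
    (hηP : ∀ x, Cb < x → η (Ioi x) = 0) (hηN : ∀ x, x < -Cb → η (Iic x) = 0) :
    GG p μ η = ∞ ↔ (tailPlus p μ Cb = ∞ ∨ tailMinus p μ (-Cb) = ∞) := by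
  have hp0 : (0:ℝ) ≤ p := by linarith
  set f : ℝ → ℝ≥0∞ := fun x => ENNReal.ofReal (|cdf μ x - cdf η x| ^ p) with hf
  have hIoi : ∫⁻ x in Ioi Cb, f x = tailPlus p μ Cb := by
    refine setLIntegral_congr_fun measurableSet_Ioi (fun x hx => ?_)
    have hη1 : cdf η x = 1 := by
      rw [cdf_eq_toReal]
      have : η (Iic x) = 1 := by
        rw [← compl_Ioi, prob_compl_eq_one_sub measurableSet_Ioi, hηP x hx, tsub_zero]
      rw [this, ENNReal.toReal_one]
    have hμx : cdf μ x = (μ (Iic x)).toReal := cdf_eq_toReal μ x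
    have hcompl : (μ (Ioi x)).toReal = 1 - cdf μ x := by
      rw [← compl_Iic, prob_compl_eq_one_sub measurableSet_Iic, hμx,
        ENNReal.toReal_sub_of_le prob_le_one ENNReal.one_ne_top, ENNReal.toReal_one]
    have habs : |cdf μ x - cdf η x| = (μ (Ioi x)).toReal := by
      rw [hη1, abs_of_nonpos (by linarith [cdf_le_one μ x]), hcompl]
      ring
    rw [hf]
    simp only
    rw [habs, ← ENNReal.ofReal_rpow_of_nonneg ENNReal.toReal_nonneg hp0,
      ENNReal.ofReal_toReal (measure_ne_top _ _)]
  have hIio : ∫⁻ x in Iio (-Cb), f x = tailMinus p μ (-Cb) := by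
    refine setLIntegral_congr_fun measurableSet_Iio (fun x hx => ?_)
    have hη0 : cdf η x = 0 := by
      rw [cdf_eq_toReal, hηN x hx, ENNReal.toReal_zero]
    have habs : |cdf μ x - cdf η x| = (μ (Iic x)).toReal := by
      rw [hη0, sub_zero, abs_of_nonneg (cdf_nonneg μ x), cdf_eq_toReal]
    rw [hf]
    simp only
    rw [habs, ← ENNReal.ofReal_rpow_of_nonneg ENNReal.toReal_nonneg hp0,
      ENNReal.ofReal_toReal (measure_ne_top _ _)]
  have hf1 : ∀ x, f x ≤ 1 := by
    intro x
    rw [hf]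
    simp only
    refine ENNReal.ofReal_le_one.mpr (Real.rpow_le_one (abs_nonneg _) ?_ hp0)
    rw [abs_le]
    constructor <;>
      [linarith [cdf_nonneg μ x, cdf_le_one η x]; linarith [cdf_le_one μ x, cdf_nonneg η x]]
  have hIcc : ∫⁻ x in Icc (-Cb) Cb, f x ≠ ∞ := by
    have hle : ∫⁻ x in Icc (-Cb) Cb, f x ≤ volume (Icc (-Cb) Cb) := by
      calc ∫⁻ x in Icc (-Cb) Cb, f x ≤ ∫⁻ _ in Icc (-Cb) Cb, (1:ℝ≥0∞) := lintegral_mono hf1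
        _ = volume (Icc (-Cb) Cb) := by rw [setLIntegral_const, one_mul]
    rw [Real.volume_Icc] at hle
    exact fun htop' => (ENNReal.ofReal_ne_top (top_le_iff.mp (htop' ▸ hle))).elim
  have hsplit : GG p μ η = (∫⁻ x in Iio (-Cb), f x)
      + ((∫⁻ x in Icc (-Cb) Cb, f x) + ∫⁻ x in Ioi Cb, f x) := by
    have h1 : GG p μ η = (∫⁻ x in Iio (-Cb), f x) + ∫⁻ x in Ici (-Cb), f x := by
      have h1' := lintegral_add_compl (μ := volume) f
        (measurableSet_Iio : MeasurableSet (Iio (-Cb)))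
      rw [compl_Iio] at h1'
      rw [GG, ← h1']
    have h2 : ∫⁻ x in Ici (-Cb), f x
        = (∫⁻ x in Icc (-Cb) Cb, f x) + ∫⁻ x in Ioi Cb, f x := by
      rw [← Icc_union_Ioi_eq_Ici (by linarith : -Cb ≤ Cb), lintegral_union measurableSet_Ioi
        ((Iic_disjoint_Ioi le_rfl).mono_left Icc_subset_Iic_self)]
    rw [h1, h2]
  rw [hsplit, hIio, hIoi, ENNReal.add_eq_top, ENNReal.add_eq_top]
  simp only [hIcc, false_or]
  tauto

lemma tailPlus_top_mono {p : ℝ} (hp0 : 0 ≤ p) {μ ρ : Measure ℝ} {c : ℝ≥0∞} (hc : c ≠ 0)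
    (hc' : c ≠ ∞) {M : ℝ} (hle : ∀ x, M < x → c * ρ (Ioi x) ≤ μ (Ioi x))
    (h : tailPlus p ρ M = ∞) : tailPlus p μ M = ∞ := by
  have hpt : ∀ x ∈ Ioi M, c ^ p * (ρ (Ioi x)) ^ p ≤ (μ (Ioi x)) ^ p := fun x hx => by
    rw [← ENNReal.mul_rpow_of_nonneg _ _ hp0]
    exact ENNReal.rpow_le_rpow (hle x hx) hp0
  have hge : c ^ p * tailPlus p ρ M ≤ tailPlus p μ M := by
    rw [tailPlus, ← lintegral_const_mul' _ _ (by
      exact ENNReal.rpow_ne_top_of_nonneg hp0 hc')]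
    exact lintegral_mono_ae ((ae_restrict_iff' measurableSet_Ioi).mpr
      (Filter.Eventually.of_forall hpt))
  rw [h, ENNReal.mul_top (ENNReal.rpow_pos (pos_iff_ne_zero.mpr hc) hc').ne'] at hge
  exact top_le_iff.mp hge

lemma tailMinus_top_mono {p : ℝ} (hp0 : 0 ≤ p) {μ ρ : Measure ℝ} {c : ℝ≥0∞} (hc : c ≠ 0)
    (hc' : c ≠ ∞) {M : ℝ} (hle : ∀ x, x < M → c * ρ (Iic x) ≤ μ (Iic x))
    (h : tailMinus p ρ M = ∞) : tailMinus p μ M = ∞ := by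
  have hpt : ∀ x ∈ Iio M, c ^ p * (ρ (Iic x)) ^ p ≤ (μ (Iic x)) ^ p := fun x hx => by
    rw [← ENNReal.mul_rpow_of_nonneg _ _ hp0]
    exact ENNReal.rpow_le_rpow (hle x hx) hp0
  have hge : c ^ p * tailMinus p ρ M ≤ tailMinus p μ M := by
    rw [tailMinus, ← lintegral_const_mul' _ _ (by
      exact ENNReal.rpow_ne_top_of_nonneg hp0 hc')]
    exact lintegral_mono_ae ((ae_restrict_iff' measurableSet_Iio).mpr
      (Filter.Eventually.of_forall hpt))
  rw [h, ENNReal.mul_top (ENNReal.rpow_pos (pos_iff_ne_zero.mpr hc) hc').ne'] at hge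
  exact top_le_iff.mp hge
section MDP3
variable {S A : Type*} [Fintype S] [Fintype A]
variable (P : S → A → S → ℝ) (π : S → A → ℝ) (Rw : S → A → S → ℝ) (γ lam : ℝ)
variable (hP : ∀ s a, (∀ s', 0 ≤ P s a s') ∧ ∑ s', P s a s' = 1)
    (hπ : ∀ s, (∀ a, 0 ≤ π s a) ∧ ∑ a, π s a = 1)

include hP hπ in
lemma oneStep_dom_Ioi (hγ0 : 0 < γ) (ν : S × A → Measure ℝ) (sa j : S × A) (x : ℝ) :
    ENNReal.ofReal (P sa.1 sa.2 j.1 * π j.1 j.2) *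
      (ν j) (Ioi ((x - Rw sa.1 sa.2 j.1)/γ)) ≤ oneStepOp P π Rw γ ν sa (Ioi x) := by
  rw [oneStep_apply P π Rw γ hP hπ ν sa measurableSet_Ioi]
  have := Finset.single_le_sum (f := fun j' : S × A =>
    ENNReal.ofReal (P sa.1 sa.2 j'.1 * π j'.1 j'.2) *
      (ν j') ((fun y => γ * y + Rw sa.1 sa.2 j'.1) ⁻¹' Ioi x))
    (fun _ _ => zero_le) (Finset.mem_univ j)
  simpa [preimage_aff_Ioi γ hγ0] using this

include hP hπ in
lemma oneStep_dom_Iic (hγ0 : 0 < γ) (ν : S × A → Measure ℝ) (sa j : S × A) (x : ℝ) :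
    ENNReal.ofReal (P sa.1 sa.2 j.1 * π j.1 j.2) *
      (ν j) (Iic ((x - Rw sa.1 sa.2 j.1)/γ)) ≤ oneStepOp P π Rw γ ν sa (Iic x) := by
  rw [oneStep_apply P π Rw γ hP hπ ν sa measurableSet_Iic]
  have := Finset.single_le_sum (f := fun j' : S × A =>
    ENNReal.ofReal (P sa.1 sa.2 j'.1 * π j'.1 j'.2) *
      (ν j') ((fun y => γ * y + Rw sa.1 sa.2 j'.1) ⁻¹' Iic x))
    (fun _ _ => zero_le) (Finset.mem_univ j)
  simpa [preimage_aff_Iic γ hγ0] using this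

include hP hπ in
lemma tailPlus_oneStep {p : ℝ} (hp0 : 0 ≤ p) (hγ0 : 0 < γ) (ν : S × A → Measure ℝ)
    (sa j : S × A) (hWj : 0 < P sa.1 sa.2 j.1 * π j.1 j.2) {M : ℝ}
    (h : tailPlus p (ν j) M = ∞) :
    tailPlus p (oneStepOp P π Rw γ ν sa) (γ * M + Rw sa.1 sa.2 j.1) = ∞ := by
  set r := Rw sa.1 sa.2 j.1 with hr
  set W := ENNReal.ofReal (P sa.1 sa.2 j.1 * π j.1 j.2) with hW
  have hW0 : W ≠ 0 := (ENNReal.ofReal_pos.mpr hWj).ne'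
  have hWtop : W ≠ ∞ := ENNReal.ofReal_ne_top
  set g : ℝ → ℝ≥0∞ := fun y => ((ν j) (Ioi y)) ^ p with hg
  have hganti : Antitone fun y : ℝ => (ν j) (Ioi y) :=
    fun a b hab => measure_mono (Ioi_subset_Ioi hab)
  have hgmeas : Measurable g := ENNReal.continuous_rpow_const.measurable.comp hganti.measurable
  have hsub : ∫⁻ x in Ioi (γ * M + r), g ((x - r)/γ)
      = ENNReal.ofReal γ * ∫⁻ y in Ioi M, g y := by
    have hind : ∀ x : ℝ, (Ioi (γ * M + r)).indicator (fun x => g ((x - r)/γ)) x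
        = ((Ioi M).indicator g) ((x - r)/γ) := by
      intro x
      by_cases hx : x ∈ Ioi (γ * M + r)
      · rw [indicator_of_mem hx, indicator_of_mem (show (x - r)/γ ∈ Ioi M by
          rw [mem_Ioi, lt_div_iff₀ hγ0]
          have := mem_Ioi.mp hx
          linarith)]
      · rw [indicator_of_notMem hx, indicator_of_notMem (fun hmem => hx (by
          rw [mem_Ioi, lt_div_iff₀ hγ0] at hmem
          rw [mem_Ioi]
          linarith))]
    calc ∫⁻ x in Ioi (γ * M + r), g ((x - r)/γ)
        = ∫⁻ x, ((Ioi M).indicator g) ((x - r)/γ) := by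
          rw [← lintegral_indicator measurableSet_Ioi]
          exact lintegral_congr hind
      _ = ENNReal.ofReal γ * ∫⁻ y, ((Ioi M).indicator g) y :=
          lint_affine _ (hgmeas.indicator measurableSet_Ioi) hγ0
      _ = ENNReal.ofReal γ * ∫⁻ y in Ioi M, g y := by rw [lintegral_indicator measurableSet_Ioi]
  have hge : W ^ p * ∫⁻ x in Ioi (γ * M + r), g ((x - r)/γ)
      ≤ tailPlus p (oneStepOp P π Rw γ ν sa) (γ * M + r) := by
    rw [← lintegral_const_mul' _ _ (ENNReal.rpow_ne_top_of_nonneg hp0 hWtop)]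
    refine lintegral_mono_ae ((ae_restrict_iff' measurableSet_Ioi).mpr
      (Filter.Eventually.of_forall fun x _ => ?_))
    rw [hg]
    simp only
    rw [← ENNReal.mul_rpow_of_nonneg _ _ hp0]
    exact ENNReal.rpow_le_rpow (oneStep_dom_Ioi P π Rw γ hP hπ hγ0 ν sa j x) hp0
  rw [hsub] at hge
  have hM : ∫⁻ y in Ioi M, g y = ∞ := h
  rw [hM, ENNReal.mul_top (by simp [hγ0, ENNReal.ofReal_eq_zero, not_le]),
    ENNReal.mul_top (ENNReal.rpow_pos (pos_iff_ne_zero.mpr hW0) hWtop).ne'] at hge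
  exact top_le_iff.mp hge

include hP hπ in
lemma tailMinus_oneStep {p : ℝ} (hp0 : 0 ≤ p) (hγ0 : 0 < γ) (ν : S × A → Measure ℝ)
    (sa j : S × A) (hWj : 0 < P sa.1 sa.2 j.1 * π j.1 j.2) {M : ℝ}
    (h : tailMinus p (ν j) M = ∞) :
    tailMinus p (oneStepOp P π Rw γ ν sa) (γ * M + Rw sa.1 sa.2 j.1) = ∞ := by
  set r := Rw sa.1 sa.2 j.1 with hr
  set W := ENNReal.ofReal (P sa.1 sa.2 j.1 * π j.1 j.2) with hW
  have hW0 : W ≠ 0 := (ENNReal.ofReal_pos.mpr hWj).ne'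
  have hWtop : W ≠ ∞ := ENNReal.ofReal_ne_top
  set g : ℝ → ℝ≥0∞ := fun y => ((ν j) (Iic y)) ^ p with hg
  have hgmono : Monotone fun y : ℝ => (ν j) (Iic y) :=
    fun a b hab => measure_mono (Iic_subset_Iic.mpr hab)
  have hgmeas : Measurable g := ENNReal.continuous_rpow_const.measurable.comp hgmono.measurable
  have hsub : ∫⁻ x in Iio (γ * M + r), g ((x - r)/γ)
      = ENNReal.ofReal γ * ∫⁻ y in Iio M, g y := by
    have hind : ∀ x : ℝ, (Iio (γ * M + r)).indicator (fun x => g ((x - r)/γ)) x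
        = ((Iio M).indicator g) ((x - r)/γ) := by
      intro x
      by_cases hx : x ∈ Iio (γ * M + r)
      · rw [indicator_of_mem hx, indicator_of_mem (show (x - r)/γ ∈ Iio M by
          rw [mem_Iio, div_lt_iff₀ hγ0]
          have := mem_Iio.mp hx
          linarith)]
      · rw [indicator_of_notMem hx, indicator_of_notMem (fun hmem => hx (by
          rw [mem_Iio, div_lt_iff₀ hγ0] at hmem
          rw [mem_Iio]
          linarith))]
    calc ∫⁻ x in Iio (γ * M + r), g ((x - r)/γ)
        = ∫⁻ x, ((Iio M).indicator g) ((x - r)/γ) := by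
          rw [← lintegral_indicator measurableSet_Iio]
          exact lintegral_congr hind
      _ = ENNReal.ofReal γ * ∫⁻ y, ((Iio M).indicator g) y :=
          lint_affine _ (hgmeas.indicator measurableSet_Iio) hγ0
      _ = ENNReal.ofReal γ * ∫⁻ y in Iio M, g y := by rw [lintegral_indicator measurableSet_Iio]
  have hge : W ^ p * ∫⁻ x in Iio (γ * M + r), g ((x - r)/γ)
      ≤ tailMinus p (oneStepOp P π Rw γ ν sa) (γ * M + r) := by
    rw [← lintegral_const_mul' _ _ (ENNReal.rpow_ne_top_of_nonneg hp0 hWtop)]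
    refine lintegral_mono_ae ((ae_restrict_iff' measurableSet_Iio).mpr
      (Filter.Eventually.of_forall fun x _ => ?_))
    rw [hg]
    simp only
    rw [← ENNReal.mul_rpow_of_nonneg _ _ hp0]
    exact ENNReal.rpow_le_rpow (oneStep_dom_Iic P π Rw γ hP hπ hγ0 ν sa j x) hp0
  rw [hsub] at hge
  have hM : ∫⁻ y in Iio M, g y = ∞ := h
  rw [hM, ENNReal.mul_top (by simp [hγ0, ENNReal.ofReal_eq_zero, not_le]),
    ENNReal.mul_top (ENNReal.rpow_pos (pos_iff_ne_zero.mpr hW0) hWtop).ne'] at hge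
  exact top_le_iff.mp hge

lemma td_dom (ν : S × A → Measure ℝ) (sa : S × A) (i : ℕ) {t : Set ℝ}
    (ht : MeasurableSet t) :
    ENNReal.ofReal ((1 - lam) * lam ^ i) * ((oneStepOp P π Rw γ)^[i+1] ν sa) t
      ≤ tdLambdaOp P π Rw γ lam ν sa t := by
  rw [tdLambdaOp, Measure.sum_apply _ ht]
  calc ENNReal.ofReal ((1 - lam) * lam ^ i) * ((oneStepOp P π Rw γ)^[i+1] ν sa) t
      = (ENNReal.ofReal ((1 - lam) * lam ^ i) • (oneStepOp P π Rw γ)^[i+1] ν sa) t := by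
        rw [Measure.smul_apply, smul_eq_mul]
    _ ≤ _ := ENNReal.le_tsum i

end MDP3

section Support
variable {S A : Type*} [Fintype S] [Fintype A]
variable (P : S → A → S → ℝ) (π : S → A → ℝ) (Rw : S → A → S → ℝ) (γ : ℝ)
variable (hP : ∀ s a, (∀ s', 0 ≤ P s a s') ∧ ∑ s', P s a s' = 1)
    (hπ : ∀ s, (∀ a, 0 ≤ π s a) ∧ ∑ a, π s a = 1)

include hP hπ in
lemma nuR_tail_plus (hγ0 : 0 < γ) (hγ1 : γ < 1) (νR : S × A → Measure ℝ)
    (hνR : ∀ sa, IsProbabilityMeasure (νR sa))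
    (hBellman : oneStepOp P π Rw γ νR = νR) {B : ℝ} (hB0 : 0 ≤ B)
    (hB : ∀ s a s', |Rw s a s'| ≤ B) {M : ℝ} (hM : B / (1 - γ) < M) (sa : S × A) :
    νR sa (Ioi M) = 0 := by
  have h1γ : (0:ℝ) < 1 - γ := by linarith
  set u : ℝ → ℝ≥0∞ := fun t => ⨆ j : S × A, νR j (Ioi t) with hu
  have hanti : Antitone u := fun a b hab =>
    iSup_mono fun j => measure_mono (Ioi_subset_Ioi hab)
  set δ := ((1 - γ) * M - B) / γ with hδ
  have hBM : B < (1 - γ) * M := by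
    rw [div_lt_iff₀ h1γ] at hM
    linarith [hM]
  have hδ0 : 0 < δ := div_pos (by linarith) hγ0
  have hstep : ∀ t, M ≤ t → u t ≤ u (t + δ) := by
    intro t ht
    have key : ∀ sa' : S × A, νR sa' (Ioi t) ≤ u ((t - B)/γ) := by
      intro sa'
      conv_lhs => rw [← hBellman]
      rw [oneStep_apply P π Rw γ hP hπ νR sa' measurableSet_Ioi]
      have hterm : ∀ j : S × A, ENNReal.ofReal (P sa'.1 sa'.2 j.1 * π j.1 j.2) *
          νR j ((fun y => γ * y + Rw sa'.1 sa'.2 j.1) ⁻¹' Ioi t)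
          ≤ ENNReal.ofReal (P sa'.1 sa'.2 j.1 * π j.1 j.2) * u ((t - B)/γ) := by
        intro j
        refine mul_le_mul_right ?_ _
        rw [preimage_aff_Ioi γ hγ0]
        refine le_trans (measure_mono (Ioi_subset_Ioi ?_))
          (le_iSup (fun j' : S × A => νR j' (Ioi ((t - B)/γ))) j)
        have := abs_le.mp (hB sa'.1 sa'.2 j.1)
        gcongr
        linarith [this.2]
      calc ∑ j : S × A, ENNReal.ofReal (P sa'.1 sa'.2 j.1 * π j.1 j.2) *
            νR j ((fun y => γ * y + Rw sa'.1 sa'.2 j.1) ⁻¹' Ioi t)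
          ≤ ∑ j : S × A, ENNReal.ofReal (P sa'.1 sa'.2 j.1 * π j.1 j.2) * u ((t - B)/γ) :=
            Finset.sum_le_sum fun j _ => hterm j
        _ = u ((t - B)/γ) := by rw [← Finset.sum_mul, sumW P π hP hπ sa', one_mul]
    have h2 : u t ≤ u ((t - B)/γ) := iSup_le key
    refine h2.trans (hanti ?_)
    rw [le_div_iff₀ hγ0]
    have hγδ : γ * δ = (1 - γ) * M - B := by
      rw [hδ, mul_comm, div_mul_cancel₀ _ hγ0.ne']
    nlinarith
  have hun : ∀ n : ℕ, u M ≤ u (M + n * δ) := by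
    intro n
    induction n with
    | zero => simp
    | succ n ih =>
      refine ih.trans (le_trans (hstep (M + n * δ) (by nlinarith [hδ0.le])) (le_of_eq ?_))
      congr 1
      push_cast
      ring
  have hbound : ∀ n : ℕ, νR sa (Ioi M) ≤ ∑ j : S × A, νR j (Ioi (M + n * δ)) := by
    intro n
    refine le_trans (le_trans (le_iSup (fun j : S × A => νR j (Ioi M)) sa) (hun n))
      (iSup_le fun j => Finset.single_le_sum
        (f := fun j' : S × A => νR j' (Ioi (M + n * δ)))
        (fun _ _ => zero_le) (Finset.mem_univ j))
  have htend : Tendsto (fun n : ℕ => ∑ j : S × A, νR j (Ioi (M + n * δ))) atTop (nhds 0) := by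
    have hj : ∀ j : S × A, Tendsto (fun n : ℕ => νR j (Ioi (M + n * δ))) atTop (nhds 0) := by
      intro j
      have hI : ⋂ n : ℕ, Ioi (M + n * δ) = (∅ : Set ℝ) := by
        ext x
        simp only [mem_iInter, mem_Ioi, mem_empty_iff_false, iff_false, not_forall, not_lt]
        obtain ⟨n, hn⟩ := exists_nat_gt ((x - M)/δ)
        refine ⟨n, ?_⟩
        rw [div_lt_iff₀ hδ0] at hn
        linarith
      have := tendsto_measure_iInter_atTop (μ := νR j) (s := fun n : ℕ => Ioi (M + n * δ))
        (fun n => measurableSet_Ioi.nullMeasurableSet)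
        (fun a b hab => Ioi_subset_Ioi (by
          have : (a:ℝ) ≤ (b:ℝ) := Nat.cast_le.mpr hab
          nlinarith [hδ0.le]))
        ⟨0, measure_ne_top _ _⟩
      rw [hI] at this
      simpa [Function.comp_def] using this
    have := tendsto_finset_sum Finset.univ (fun j (_ : j ∈ Finset.univ) => hj j)
    simpa using this
  exact le_antisymm (ge_of_tendsto' htend hbound) zero_le

include hP hπ in
lemma nuR_tail_minus (hγ0 : 0 < γ) (hγ1 : γ < 1) (νR : S × A → Measure ℝ)
    (hνR : ∀ sa, IsProbabilityMeasure (νR sa))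
    (hBellman : oneStepOp P π Rw γ νR = νR) {B : ℝ} (hB0 : 0 ≤ B)
    (hB : ∀ s a s', |Rw s a s'| ≤ B) {M : ℝ} (hM : M < -(B / (1 - γ))) (sa : S × A) :
    νR sa (Iic M) = 0 := by
  have h1γ : (0:ℝ) < 1 - γ := by linarith
  set u : ℝ → ℝ≥0∞ := fun t => ⨆ j : S × A, νR j (Iic t) with hu
  have hmono : Monotone u := fun a b hab =>
    iSup_mono fun j => measure_mono (Iic_subset_Iic.mpr hab)
  set δ := (-(1 - γ) * M - B) / γ with hδ
  have hBM : B < -(1 - γ) * M := by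
    have hM' : B / (1 - γ) < -M := by linarith
    rw [div_lt_iff₀ h1γ] at hM'
    nlinarith
  have hδ0 : 0 < δ := div_pos (by linarith) hγ0
  have hstep : ∀ t, t ≤ M → u (t - δ) ≤ u (t - δ) ∧ u t ≤ u (t - δ) := by
    intro t ht
    refine ⟨le_rfl, ?_⟩
    have key : ∀ sa' : S × A, νR sa' (Iic t) ≤ u ((t + B)/γ) := by
      intro sa'
      conv_lhs => rw [← hBellman]
      rw [oneStep_apply P π Rw γ hP hπ νR sa' measurableSet_Iic]
      have hterm : ∀ j : S × A, ENNReal.ofReal (P sa'.1 sa'.2 j.1 * π j.1 j.2) *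
          νR j ((fun y => γ * y + Rw sa'.1 sa'.2 j.1) ⁻¹' Iic t)
          ≤ ENNReal.ofReal (P sa'.1 sa'.2 j.1 * π j.1 j.2) * u ((t + B)/γ) := by
        intro j
        refine mul_le_mul_right ?_ _
        rw [preimage_aff_Iic γ hγ0]
        refine le_trans (measure_mono (Iic_subset_Iic.mpr ?_))
          (le_iSup (fun j' : S × A => νR j' (Iic ((t + B)/γ))) j)
        have := abs_le.mp (hB sa'.1 sa'.2 j.1)
        gcongr
        linarith [this.1]
      calc ∑ j : S × A, ENNReal.ofReal (P sa'.1 sa'.2 j.1 * π j.1 j.2) *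
            νR j ((fun y => γ * y + Rw sa'.1 sa'.2 j.1) ⁻¹' Iic t)
          ≤ ∑ j : S × A, ENNReal.ofReal (P sa'.1 sa'.2 j.1 * π j.1 j.2) * u ((t + B)/γ) :=
            Finset.sum_le_sum fun j _ => hterm j
        _ = u ((t + B)/γ) := by rw [← Finset.sum_mul, sumW P π hP hπ sa', one_mul]
    have h2 : u t ≤ u ((t + B)/γ) := iSup_le key
    refine h2.trans (hmono ?_)
    rw [div_le_iff₀ hγ0]
    have hγδ : γ * δ = -(1 - γ) * M - B := by
      rw [hδ, mul_comm, div_mul_cancel₀ _ hγ0.ne']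
    nlinarith
  have hun : ∀ n : ℕ, u M ≤ u (M - n * δ) := by
    intro n
    induction n with
    | zero => simp
    | succ n ih =>
      refine ih.trans (le_trans ((hstep (M - n * δ) (by nlinarith [hδ0.le])).2 ) (le_of_eq ?_))
      congr 1
      push_cast
      ring
  have hbound : ∀ n : ℕ, νR sa (Iic M) ≤ ∑ j : S × A, νR j (Iic (M - n * δ)) := by
    intro n
    refine le_trans (le_trans (le_iSup (fun j : S × A => νR j (Iic M)) sa) (hun n))
      (iSup_le fun j => Finset.single_le_sum
        (f := fun j' : S × A => νR j' (Iic (M - n * δ)))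
        (fun _ _ => zero_le) (Finset.mem_univ j))
  have htend : Tendsto (fun n : ℕ => ∑ j : S × A, νR j (Iic (M - n * δ))) atTop (nhds 0) := by
    have hj : ∀ j : S × A, Tendsto (fun n : ℕ => νR j (Iic (M - n * δ))) atTop (nhds 0) := by
      intro j
      have hI : ⋂ n : ℕ, Iic (M - n * δ) = (∅ : Set ℝ) := by
        ext x
        simp only [mem_iInter, mem_Iic, mem_empty_iff_false, iff_false, not_forall, not_le]
        obtain ⟨n, hn⟩ := exists_nat_gt ((M - x)/δ)
        refine ⟨n, ?_⟩
        rw [div_lt_iff₀ hδ0] at hn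
        linarith
      have := tendsto_measure_iInter_atTop (μ := νR j) (s := fun n : ℕ => Iic (M - n * δ))
        (fun n => measurableSet_Iic.nullMeasurableSet)
        (fun a b hab => Iic_subset_Iic.mpr (by
          have : (a:ℝ) ≤ (b:ℝ) := Nat.cast_le.mpr hab
          nlinarith [hδ0.le]))
        ⟨0, measure_ne_top _ _⟩
      rw [hI] at this
      simpa [Function.comp_def] using this
    have := tendsto_finset_sum Finset.univ (fun j (_ : j ∈ Finset.univ) => hj j)
    simpa using this
  exact le_antisymm (ge_of_tendsto' htend hbound) zero_le

end Support

lemma tailPlus_top_congr {p : ℝ} (hp0 : 0 ≤ p) (μ : Measure ℝ) [IsProbabilityMeasure μ]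
    (M M' : ℝ) : tailPlus p μ M = ∞ ↔ tailPlus p μ M' = ∞ :=
  lint_Ioi_top_congr (fun _ => tail_rpow_le_one hp0 μ _) M M'

lemma tailMinus_top_congr {p : ℝ} (hp0 : 0 ≤ p) (μ : Measure ℝ) [IsProbabilityMeasure μ]
    (M M' : ℝ) : tailMinus p μ M = ∞ ↔ tailMinus p μ M' = ∞ :=
  lint_Iio_top_congr (fun _ => tail_rpow_le_one hp0 μ _) M M'

section Dicho
variable {S A : Type*} [Fintype S] [Fintype A]
variable (P : S → A → S → ℝ) (π : S → A → ℝ) (Rw : S → A → S → ℝ) (γ lam : ℝ)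
variable (hP : ∀ s a, (∀ s', 0 ≤ P s a s') ∧ ∑ s', P s a s' = 1)
    (hπ : ∀ s, (∀ a, 0 ≤ π s a) ∧ ∑ a, π s a = 1)
variable {p : ℝ} (hp : 1 ≤ p) (hγ0 : 0 < γ) (hγ1 : γ < 1)
variable (νR : S × A → Measure ℝ) (hνR : ∀ sa, IsProbabilityMeasure (νR sa))
    (hBellman : oneStepOp P π Rw γ νR = νR)
variable {Cb : ℝ} (hCb0 : 0 ≤ Cb)
    (hηP : ∀ (j : S × A) (x : ℝ), Cb < x → νR j (Ioi x) = 0)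
    (hηN : ∀ (j : S × A) (x : ℝ), x < -Cb → νR j (Iic x) = 0)

include hP hπ hp hγ0 hνR hBellman hCb0 hηP hηN in
lemma iter_dichotomy (ν : S × A → Measure ℝ) (hν : ∀ j, IsProbabilityMeasure (ν j))
    (D : ℝ≥0∞) (hD : ∀ j, GG p (ν j) (νR j) ≠ ∞ → GG p (ν j) (νR j) ≤ D) :
    ∀ (m : ℕ) (sa : S × A), GG p ((oneStepOp P π Rw γ)^[m] ν sa) (νR sa) = ∞ ∨
      GG p ((oneStepOp P π Rw γ)^[m] ν sa) (νR sa) ≤ ENNReal.ofReal (γ ^ m) * D := by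
  have hp0 : (0:ℝ) ≤ p := by linarith
  intro m
  induction m with
  | zero =>
    intro sa
    simp only [Function.iterate_zero, id_eq, pow_zero, ENNReal.ofReal_one, one_mul]
    by_cases h : GG p (ν sa) (νR sa) = ∞
    · exact Or.inl h
    · exact Or.inr (hD sa h)
  | succ m ih =>
    intro sa
    rw [Function.iterate_succ_apply']
    by_cases hex : ∃ j : S × A, 0 < P sa.1 sa.2 j.1 * π j.1 j.2 ∧
        GG p ((oneStepOp P π Rw γ)^[m] ν j) (νR j) = ∞
    · left
      obtain ⟨j, hWj, htop⟩ := hex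
      haveI := isProb_iter P π Rw γ hP hπ ν hν m j
      haveI := isProb_oneStep P π Rw γ hP hπ _ (isProb_iter P π Rw γ hP hπ ν hν m) sa
      haveI := hνR j
      haveI := hνR sa
      rcases (GG_top_iff hp _ (νR j) hCb0 (hηP j) (hηN j)).mp htop with hpl | hmn
      · refine (GG_top_iff hp _ (νR sa) hCb0 (hηP sa) (hηN sa)).mpr (Or.inl ?_)
        have := tailPlus_oneStep P π Rw γ hP hπ hp0 hγ0 _ sa j hWj hpl
        exact (tailPlus_top_congr hp0 _ _ _).mp this
      · refine (GG_top_iff hp _ (νR sa) hCb0 (hηP sa) (hηN sa)).mpr (Or.inr ?_)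
        have := tailMinus_oneStep P π Rw γ hP hπ hp0 hγ0 _ sa j hWj hmn
        exact (tailMinus_top_congr hp0 _ _ _).mp this
    · right
      push_neg at hex
      have hbd : ∀ j : S × A, ENNReal.ofReal (P sa.1 sa.2 j.1 * π j.1 j.2) *
          GG p ((oneStepOp P π Rw γ)^[m] ν j) (νR j)
          ≤ ENNReal.ofReal (P sa.1 sa.2 j.1 * π j.1 j.2) * (ENNReal.ofReal (γ ^ m) * D) := by
        intro j
        rcases ((hP sa.1 sa.2).1 j.1).lt_or_eq with hP0 | hP0
        · rcases ((hπ j.1).1 j.2).lt_or_eq with hπ0 | hπ0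
          · have hW : 0 < P sa.1 sa.2 j.1 * π j.1 j.2 := mul_pos hP0 hπ0
            have hne : GG p ((oneStepOp P π Rw γ)^[m] ν j) (νR j) ≠ ∞ := hex j hW
            exact mul_le_mul_right ((ih j).resolve_left hne) _
          · rw [← hπ0, mul_zero, ENNReal.ofReal_zero, zero_mul, zero_mul]
        · rw [← hP0, zero_mul, ENNReal.ofReal_zero, zero_mul, zero_mul]
      have hcontr := GG_oneStep P π Rw γ hP hπ hp hγ0 _ νR
        (isProb_iter P π Rw γ hP hπ ν hν m) hνR sa
      rw [show oneStepOp P π Rw γ νR sa = νR sa from congrFun hBellman sa] at hcontr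
      refine hcontr.trans ?_
      calc ENNReal.ofReal γ * ∑ j : S × A, ENNReal.ofReal (P sa.1 sa.2 j.1 * π j.1 j.2)
            * GG p ((oneStepOp P π Rw γ)^[m] ν j) (νR j)
          ≤ ENNReal.ofReal γ * ∑ j : S × A, ENNReal.ofReal (P sa.1 sa.2 j.1 * π j.1 j.2)
            * (ENNReal.ofReal (γ ^ m) * D) :=
            mul_le_mul_right (Finset.sum_le_sum fun j _ => hbd j) _
        _ = ENNReal.ofReal (γ ^ (m+1)) * D := by
            rw [← Finset.sum_mul, sumW P π hP hπ sa, one_mul, ← mul_assoc,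
              ← ENNReal.ofReal_mul hγ0.le, ← pow_succ']

include hP hπ hp hγ0 hγ1 hνR hBellman hCb0 hηP hηN in
lemma td_dichotomy (hlam0 : 0 ≤ lam) (hlam1 : lam < 1)
    (ν : S × A → Measure ℝ) (hν : ∀ j, IsProbabilityMeasure (ν j))
    (D : ℝ≥0∞) (hD : ∀ j, GG p (ν j) (νR j) ≠ ∞ → GG p (ν j) (νR j) ≤ D) (sa : S × A) :
    GG p (tdLambdaOp P π Rw γ lam ν sa) (νR sa) = ∞ ∨
      GG p (tdLambdaOp P π Rw γ lam ν sa) (νR sa) ≤ ENNReal.ofReal γ * D := by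
  have hp0 : (0:ℝ) ≤ p := by linarith
  haveI := hνR sa
  haveI := isProb_td P π Rw γ lam hP hπ hlam0 hlam1 ν hν sa
  by_cases hex : ∃ i : ℕ, ENNReal.ofReal ((1 - lam) * lam ^ i) ≠ 0 ∧
      GG p ((oneStepOp P π Rw γ)^[i+1] ν sa) (νR sa) = ∞
  · left
    obtain ⟨i, hci, htop⟩ := hex
    haveI := isProb_iter P π Rw γ hP hπ ν hν (i+1) sa
    rcases (GG_top_iff hp _ (νR sa) hCb0 (hηP sa) (hηN sa)).mp htop with hpl | hmn
    · refine (GG_top_iff hp _ (νR sa) hCb0 (hηP sa) (hηN sa)).mpr (Or.inl ?_)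
      exact tailPlus_top_mono hp0 hci ENNReal.ofReal_ne_top
        (fun x _ => td_dom P π Rw γ lam ν sa i measurableSet_Ioi) hpl
    · refine (GG_top_iff hp _ (νR sa) hCb0 (hηP sa) (hηN sa)).mpr (Or.inr ?_)
      exact tailMinus_top_mono hp0 hci ENNReal.ofReal_ne_top
        (fun x _ => td_dom P π Rw γ lam ν sa i measurableSet_Iic) hmn
  · right
    push_neg at hex
    have hbd : ∀ i : ℕ, ENNReal.ofReal ((1 - lam) * lam ^ i) *
        GG p ((oneStepOp P π Rw γ)^[i+1] ν sa) (νR sa)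
        ≤ ENNReal.ofReal ((1 - lam) * lam ^ i) * (ENNReal.ofReal γ * D) := by
      intro i
      by_cases hci : ENNReal.ofReal ((1 - lam) * lam ^ i) = 0
      · rw [hci, zero_mul, zero_mul]
      · have hne := hex i hci
        have hiter := (iter_dichotomy P π Rw γ hP hπ hp hγ0 νR hνR hBellman hCb0 hηP hηN
          ν hν D hD (i+1) sa).resolve_left hne
        refine mul_le_mul_right (hiter.trans ?_) _
        refine mul_le_mul_left (ENNReal.ofReal_le_ofReal ?_) D
        calc γ ^ (i+1) ≤ γ ^ 1 := pow_le_pow_of_le_one hγ0.le hγ1.le (by omega)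
          _ = γ := pow_one γ
    calc GG p (tdLambdaOp P π Rw γ lam ν sa) (νR sa)
        ≤ ∑' i : ℕ, ENNReal.ofReal ((1 - lam) * lam ^ i)
            * GG p ((oneStepOp P π Rw γ)^[i+1] ν sa) (νR sa) :=
          GG_td P π Rw γ lam hP hπ hp hlam0 hlam1 ν hν (νR sa) (hνR sa) sa
      _ ≤ ∑' i : ℕ, ENNReal.ofReal ((1 - lam) * lam ^ i) * (ENNReal.ofReal γ * D) :=
          ENNReal.tsum_le_tsum hbd
      _ = ENNReal.ofReal γ * D := by
          rw [ENNReal.tsum_mul_right, tsum_c lam hlam0 hlam1, one_mul]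

end Dicho


/-- The return distribution `ν_R^π`, characterized by the distributional Bellman equation
`ν_R^π = T₁ ν_R^π`, is a fixed point of the distributional TD(λ) operator:
`T_λ^{μ,π} ν_R^π = ν_R^π`. Combined with the `γ^{1/p}`-contraction property, the iteration
`ν_{k+1} = T_λ^{μ,π} ν_k` converges to `ν_R^π` from any initial `ν₀`. -/
theorem stmt_10 {S A : Type*} [Fintype S] [Fintype A] [Nonempty S] [Nonempty A]
    (P : S → A → S → ℝ) (π : S → A → ℝ) (Rw : S → A → S → ℝ)
    (hP : ∀ s a, (∀ s', 0 ≤ P s a s') ∧ ∑ s', P s a s' = 1)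
    (hπ : ∀ s, (∀ a, 0 ≤ π s a) ∧ ∑ a, π s a = 1)
    (γ lam p : ℝ) (hγ0 : 0 < γ) (hγ1 : γ < 1) (hlam0 : 0 ≤ lam) (hlam1 : lam < 1)
    (hp : 1 ≤ p)
    (νR : S × A → Measure ℝ) (hνR : ∀ sa, IsProbabilityMeasure (νR sa))
    (hBellman : oneStepOp P π Rw γ νR = νR) :
    tdLambdaOp P π Rw γ lam νR = νR ∧
      ∀ ν₀ : S × A → Measure ℝ, (∀ sa, IsProbabilityMeasure (ν₀ sa)) →
        Tendsto (fun k => supDist p ((tdLambdaOp P π Rw γ lam)^[k] ν₀) νR)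
          atTop (nhds 0) := by
  have h1γ : (0:ℝ) < 1 - γ := by linarith
  have hp0 : (0:ℝ) ≤ p := by linarith
  have hp' : (0:ℝ) < 1/p := by
    apply one_div_pos.mpr
    linarith
  obtain ⟨B₀, hB₀⟩ := Finite.exists_le (fun x : S × A × S => |Rw x.1 x.2.1 x.2.2|)
  set B := max B₀ 0 with hBdef
  have hB0 : (0:ℝ) ≤ B := le_max_right _ _
  have hB : ∀ s a s', |Rw s a s'| ≤ B := fun s a s' => (hB₀ (s, a, s')).trans (le_max_left _ _)
  set Cb := B / (1 - γ) + 1 with hCbdef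
  have hCb0 : 0 ≤ Cb := by positivity
  have hηP : ∀ (j : S × A) (x : ℝ), Cb < x → νR j (Ioi x) = 0 := fun j x hx =>
    nuR_tail_plus P π Rw γ hP hπ hγ0 hγ1 νR hνR hBellman hB0 hB (by
      have hd : 0 ≤ B / (1 - γ) := by positivity
      rw [hCbdef] at hx
      linarith) j
  have hηN : ∀ (j : S × A) (x : ℝ), x < -Cb → νR j (Iic x) = 0 := fun j x hx =>
    nuR_tail_minus P π Rw γ hP hπ hγ0 hγ1 νR hνR hBellman hB0 hB (by
      have hd : 0 ≤ B / (1 - γ) := by positivity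
      rw [hCbdef] at hx
      linarith) j
  refine ⟨td_fixed P π Rw γ lam hlam0 hlam1 νR hBellman, ?_⟩
  intro ν₀ hν₀
  have hprob : ∀ k (sa : S × A), IsProbabilityMeasure ((tdLambdaOp P π Rw γ lam)^[k] ν₀ sa) := by
    intro k
    induction k with
    | zero => exact hν₀
    | succ k ih =>
      intro sa
      rw [Function.iterate_succ_apply']
      exact isProb_td P π Rw γ lam hP hπ hlam0 hlam1 _ ih sa
  set d : ℕ → ℝ := fun k =>
    ⨆ sa : S × A, (GG p ((tdLambdaOp P π Rw γ lam)^[k] ν₀ sa) (νR sa)).toReal with hd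
  have hd0 : ∀ k, 0 ≤ d k := fun k => by
    simp only [hd]
    exact Real.iSup_nonneg fun sa => ENNReal.toReal_nonneg
  have hdle : ∀ k (sa : S × A),
      (GG p ((tdLambdaOp P π Rw γ lam)^[k] ν₀ sa) (νR sa)).toReal ≤ d k := fun k sa => by
    simp only [hd]
    exact le_ciSup (f := fun sa : S × A =>
      (GG p ((tdLambdaOp P π Rw γ lam)^[k] ν₀ sa) (νR sa)).toReal)
      ((Set.finite_range _).bddAbove) sa
  have hdrec : ∀ k, d (k+1) ≤ γ * d k := by
    intro k
    have hdk1 : d (k+1) = ⨆ sa : S × A,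
        (GG p ((tdLambdaOp P π Rw γ lam)^[k+1] ν₀ sa) (νR sa)).toReal := by simp only [hd]
    rw [hdk1]
    refine ciSup_le fun sa => ?_
    rw [Function.iterate_succ_apply']
    have hdich := td_dichotomy P π Rw γ lam hP hπ hp hγ0 hγ1 νR hνR hBellman hCb0 hηP hηN
      hlam0 hlam1 _ (hprob k) (ENNReal.ofReal (d k)) (fun j hne => by
        rw [← ENNReal.ofReal_toReal hne]
        exact ENNReal.ofReal_le_ofReal (hdle k j)) sa
    rcases hdich with htop | hle
    · rw [htop]
      simp only [ENNReal.toReal_top]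
      exact mul_nonneg hγ0.le (hd0 k)
    · have := ENNReal.toReal_mono
        (ENNReal.mul_ne_top ENNReal.ofReal_ne_top ENNReal.ofReal_ne_top) hle
      rwa [ENNReal.toReal_mul, ENNReal.toReal_ofReal hγ0.le,
        ENNReal.toReal_ofReal (hd0 k)] at this
  have hiter : ∀ k, d k ≤ γ ^ k * d 0 := by
    intro k
    induction k with
    | zero => simp
    | succ k ih =>
      calc d (k+1) ≤ γ * d k := hdrec k
        _ ≤ γ * (γ ^ k * d 0) := mul_le_mul_of_nonneg_left ih hγ0.le
        _ = γ ^ (k+1) * d 0 := by ring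
  have hsup_eq : ∀ k, supDist p ((tdLambdaOp P π Rw γ lam)^[k] ν₀) νR
      = ⨆ sa : S × A,
        ((GG p ((tdLambdaOp P π Rw γ lam)^[k] ν₀ sa) (νR sa)).toReal) ^ (1/p) := by
    intro k
    rw [supDist]
    exact iSup_congr fun sa => lpDist_eq hp _ _
  have hub : ∀ k, supDist p ((tdLambdaOp P π Rw γ lam)^[k] ν₀) νR ≤ (γ ^ k * d 0) ^ (1/p) := by
    intro k
    rw [hsup_eq k]
    refine ciSup_le fun sa => ?_
    exact Real.rpow_le_rpow ENNReal.toReal_nonneg ((hdle k sa).trans (hiter k)) hp'.le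
  have hlb : ∀ k, 0 ≤ supDist p ((tdLambdaOp P π Rw γ lam)^[k] ν₀) νR := by
    intro k
    rw [hsup_eq k]
    exact Real.iSup_nonneg fun sa => Real.rpow_nonneg ENNReal.toReal_nonneg _
  have hbk : ∀ k : ℕ, (γ ^ k * d 0) ^ (1/p) = (γ ^ (1/p)) ^ k * (d 0) ^ (1/p) := by
    intro k
    rw [Real.mul_rpow (pow_nonneg hγ0.le k) (hd0 0)]
    congr 1
    rw [← Real.rpow_natCast γ k, ← Real.rpow_mul hγ0.le, mul_comm,
      Real.rpow_mul hγ0.le, Real.rpow_natCast]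
  have hbtend : Tendsto (fun k : ℕ => (γ ^ k * d 0) ^ (1/p)) atTop (nhds 0) := by
    simp_rw [hbk]
    have h0 := tendsto_pow_atTop_nhds_zero_of_lt_one (Real.rpow_nonneg hγ0.le _)
      (Real.rpow_lt_one hγ0.le hγ1 hp')
    have hmul := h0.mul_const ((d 0) ^ (1/p))
    rwa [zero_mul] at hmul
  exact tendsto_of_tendsto_of_tendsto_of_le_of_le tendsto_const_nhds hbtend hlb hub
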